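/- For every instance in which each project valuation v_k is monotone and submodular (with v_k(∅)=0), there exists an allocation S and a payment vector p such that (S, p) is core stable and SW(S) ≥ OPT/2, i.e., a (1,2)-core stable solution exists. -/
import Mathlib

open Finset
open scoped Classical
set_option linter.unusedSectionVars false

section Greedy

variable {𝒩 P : Type*} [Fintype 𝒩] [DecidableEq 𝒩] [Fintype P] [Nonempty P]
variable (v : P → Finset 𝒩 → ℝ)

/-- Marginal value of agent `i` for project `k` given current set `A`. -/
noncomputable def marg (k : P) (A : Finset 𝒩) (i : 𝒩) : ℝ := v k (insert i A) - v k A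

/-- A project maximizing the marginal value of agent `i`. -/
noncomputable def kstar (S : P → Finset 𝒩) (i : 𝒩) : P :=
  Classical.choose ((univ : Finset P).exists_max_image (fun k => marg v k (S k) i)
    univ_nonempty)

lemma kstar_spec (S : P → Finset 𝒩) (i : 𝒩) (k : P) :
    marg v k (S k) i ≤ marg v (kstar v S i) (S (kstar v S i)) i := by
  have h := Classical.choose_spec ((univ : Finset P).exists_max_image
    (fun k => marg v k (S k) i) univ_nonempty)
  exact h.2 k (mem_univ k)

/-- Greedy allocation after processing a list of agents (head processed last). -/
noncomputable def gS : List 𝒩 → P → Finset 𝒩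
  | [] => fun _ => ∅
  | i :: l => fun k =>
      if k = kstar v (gS l) i then insert i (gS l k) else gS l k

/-- Greedy payments after processing a list of agents. -/
noncomputable def gp : List 𝒩 → 𝒩 → ℝ
  | [] => fun _ => 0
  | i :: l => Function.update (gp l) i
      (marg v (kstar v (gS v l) i) (gS v l (kstar v (gS v l) i)) i)

variable (hzero : ∀ k, v k ∅ = 0)
variable (hnonneg : ∀ k (T : Finset 𝒩), 0 ≤ v k T)
variable (hmono : ∀ k (A B : Finset 𝒩), A ⊆ B → v k A ≤ v k B)
variable (hsubmod : ∀ k (A B : Finset 𝒩) (i : 𝒩), A ⊆ B →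
      v k (insert i B) - v k B ≤ v k (insert i A) - v k A)

include hmono in
lemma marg_nonneg (k : P) (A : Finset 𝒩) (i : 𝒩) : 0 ≤ marg v k A i := by
  have := hmono k A (insert i A) (subset_insert i A)
  simp [marg]; linarith

include hmono hsubmod in
/-- For monotone submodular `v`: `v (A ∪ T) ≤ v A + ∑_{i ∈ T \ A} marg`. -/
lemma submod_bound (k : P) (A : Finset 𝒩) (T : Finset 𝒩) :
    v k (A ∪ T) ≤ v k A + ∑ i ∈ T \ A, marg v k A i := by
  induction T using Finset.induction_on with
  | empty => simp
  | @insert j T hj ih =>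
    by_cases hjA : j ∈ A
    · have h1 : A ∪ insert j T = A ∪ T := by
        rw [Finset.union_insert, Finset.insert_eq_self.mpr (Finset.mem_union_left _ hjA)]
      have h2 : insert j T \ A = T \ A := Finset.insert_sdiff_of_mem _ hjA
      rw [h1, h2]; exact ih
    · have h1 : A ∪ insert j T = insert j (A ∪ T) := Finset.union_insert _ _ _
      have h2 : insert j T \ A = insert j (T \ A) :=
        Finset.insert_sdiff_of_notMem _ hjA
      have hjTA : j ∉ T \ A := by simp [hj]
      rw [h1, h2, Finset.sum_insert hjTA]
      have h3 := hsubmod k A (A ∪ T) j subset_union_left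
      have : v k (insert j (A ∪ T)) - v k (A ∪ T) ≤ marg v k A j := h3
      linarith
end Greedy

section Inv
variable {𝒩 P : Type*} [Fintype 𝒩] [DecidableEq 𝒩] [Fintype P] [Nonempty P]
variable (v : P → Finset 𝒩 → ℝ)
variable (hzero : ∀ k, v k ∅ = 0)
variable (hnonneg : ∀ k (T : Finset 𝒩), 0 ≤ v k T)
variable (hmono : ∀ k (A B : Finset 𝒩), A ⊆ B → v k A ≤ v k B)
variable (hsubmod : ∀ k (A B : Finset 𝒩) (i : 𝒩), A ⊆ B →
      v k (insert i B) - v k B ≤ v k (insert i A) - v k A)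

include hzero hmono hsubmod in
lemma greedy_inv : ∀ l : List 𝒩, l.Nodup →
    (∀ k, gS v l k ⊆ l.toFinset) ∧
    (∀ k m, k ≠ m → Disjoint (gS v l k) (gS v l m)) ∧
    (univ.biUnion (gS v l) = l.toFinset) ∧
    (∀ i, 0 ≤ gp v l i) ∧
    (∀ k, ∑ i ∈ gS v l k, gp v l i = v k (gS v l k)) ∧
    (∀ k i, i ∈ l → marg v k (gS v l k) i ≤ gp v l i) := by
  intro l hnd
  induction l with
  | nil => refine ⟨by simp [gS], by simp [gS], by ext i; simp [gS], by simp [gp], by simp [gS, gp, hzero], by simp⟩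
  | cons j l ih =>
    have hjl : j ∉ l := (List.nodup_cons.mp hnd).1
    obtain ⟨h1, h2, h3, h4, h5, h6⟩ := ih (List.nodup_cons.mp hnd).2
    set S := gS v l with hS
    set ks := kstar v S j with hks
    set pj : ℝ := marg v ks (S ks) j with hpj
    have hSnew : ∀ k, gS v (j :: l) k = if k = ks then insert j (S k) else S k := by
      intro k; simp only [gS, hS, hks]
    have hpnew : gp v (j :: l) = Function.update (gp v l) j pj := by
      simp only [gp, hS, hks, hpj]
    have hjS : ∀ k, j ∉ S k := fun k hmem => hjl (List.mem_toFinset.mp (h1 k hmem))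
    have hsub : ∀ k, S k ⊆ gS v (j :: l) k := by
      intro k; rw [hSnew k]; split
      · exact subset_insert _ _
      · exact Subset.rfl
    have hpj0 : 0 ≤ pj := marg_nonneg v hmono ks (S ks) j
    refine ⟨?_, ?_, ?_, ?_, ?_, ?_⟩
    · intro k
      rw [hSnew k]; simp only [List.toFinset_cons]
      split
      · exact insert_subset_insert _ (h1 k)
      · exact (h1 k).trans (subset_insert _ _)
    · intro k m hkm
      rw [hSnew k, hSnew m]
      by_cases hk : k = ks <;> by_cases hm : m = ks
      · exact absurd (hk.trans hm.symm) hkm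
      · rw [if_pos hk, if_neg hm]
        exact (disjoint_insert_left).mpr ⟨hjS m, h2 k m hkm⟩
      · rw [if_neg hk, if_pos hm]
        exact (disjoint_insert_right).mpr ⟨hjS k, h2 k m hkm⟩
      · rw [if_neg hk, if_neg hm]; exact h2 k m hkm
    · ext i
      rw [List.toFinset_cons, ← h3]
      simp only [mem_biUnion, mem_univ, true_and, mem_insert]
      constructor
      · rintro ⟨k, hk⟩
        rw [hSnew k] at hk
        by_cases hkks : k = ks
        · rw [if_pos hkks] at hk
          rcases mem_insert.mp hk with h | h
          · exact Or.inl h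
          · exact Or.inr ⟨k, h⟩
        · rw [if_neg hkks] at hk
          exact Or.inr ⟨k, hk⟩
      · rintro (rfl | ⟨k, hk⟩)
        · exact ⟨ks, by rw [hSnew ks, if_pos rfl]; exact mem_insert_self _ _⟩
        · exact ⟨k, hsub k hk⟩
    · intro i
      rw [hpnew]
      by_cases hij : i = j
      · subst hij; rw [Function.update_self]; exact hpj0
      · rw [Function.update_of_ne hij]; exact h4 i
    · intro k
      have hupd : ∀ i ∈ S k, gp v (j :: l) i = gp v l i := by
        intro i hi
        rw [hpnew, Function.update_of_ne (fun h => hjS k (by rw [← h]; exact hi))]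
      by_cases hkks : k = ks
      · rw [hSnew k, if_pos hkks, Finset.sum_insert (hjS k)]
        rw [Finset.sum_congr rfl hupd, h5 k]
        rw [hpnew, Function.update_self]
        rw [hkks]
        simp [hpj, marg]
      · rw [hSnew k, if_neg hkks, Finset.sum_congr rfl hupd, h5 k]
    · intro k i hi
      by_cases hij : i = j
      · subst hij
        rw [hpnew, Function.update_self]
        by_cases hkks : k = ks
        · rw [hSnew k, if_pos hkks]
          have : marg v k (insert i (S k)) i = 0 := by
            simp [marg, Finset.insert_idem]
          rw [this]; exact hpj0
        · rw [hSnew k, if_neg hkks]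
          exact kstar_spec v S i k
      · have hil : i ∈ l := by
          rcases List.mem_cons.mp hi with h | h
          · exact absurd h hij
          · exact h
        rw [hpnew, Function.update_of_ne hij]
        calc marg v k (gS v (j :: l) k) i ≤ marg v k (S k) i := by
              have := hsubmod k (S k) (gS v (j :: l) k) i (hsub k)
              simpa [marg] using this
          _ ≤ gp v l i := h6 k i hil

end Inv

/-- For every instance with monotone submodular project valuations, there exists a
`(1,2)`-core stable solution: an allocation `S` with payments `p` that are nonnegative,
stable, budget-balanced, and such that `SW(S) ≥ OPT / 2`. -/
theorem stmt1 {𝒩 P : Type*} [Fintype 𝒩] [DecidableEq 𝒩] [Fintype P] [Nonempty P]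
    (v : P → Finset 𝒩 → ℝ)
    (hzero : ∀ k, v k ∅ = 0)
    (hnonneg : ∀ k (T : Finset 𝒩), 0 ≤ v k T)
    (hmono : ∀ k (A B : Finset 𝒩), A ⊆ B → v k A ≤ v k B)
    (hsubmod : ∀ k (A B : Finset 𝒩) (i : 𝒩), A ⊆ B →
      v k (insert i B) - v k B ≤ v k (insert i A) - v k A) :
    ∃ (S : P → Finset 𝒩) (p : 𝒩 → ℝ),
      -- S is an allocation
      (∀ k l, k ≠ l → Disjoint (S k) (S l)) ∧
      Finset.univ.biUnion S = Finset.univ ∧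
      -- p is a payment vector
      (∀ i, 0 ≤ p i) ∧
      -- stability
      (∀ k (T : Finset 𝒩), v k (S k ∪ T) ≤ ∑ i ∈ S k ∪ T, p i) ∧
      -- budget balance
      (∑ i, p i = ∑ k, v k (S k)) ∧
      -- SW(S) ≥ OPT / 2
      (∀ S' : P → Finset 𝒩,
        (∀ k l, k ≠ l → Disjoint (S' k) (S' l)) →
        Finset.univ.biUnion S' = Finset.univ →
        ∑ k, v k (S' k) ≤ 2 * ∑ k, v k (S k)) := by
  classical
  set L : List 𝒩 := Finset.univ.toList with hL
  have hLnd : L.Nodup := Finset.nodup_toList _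
  have hLfin : L.toFinset = (Finset.univ : Finset 𝒩) := Finset.toList_toFinset _
  obtain ⟨h1, h2, h3, h4, h5, h6⟩ := greedy_inv v hzero hmono hsubmod L hLnd
  set S := gS v L with hS
  set p := gp v L with hp
  rw [hLfin] at h3
  -- stability
  have hstab : ∀ k (T : Finset 𝒩), v k (S k ∪ T) ≤ ∑ i ∈ S k ∪ T, p i := by
    intro k T
    have hb := submod_bound v hmono hsubmod k (S k) T
    have hm : ∀ i ∈ T \ S k, marg v k (S k) i ≤ p i := by
      intro i _
      exact h6 k i (by rw [← List.mem_toFinset, hLfin]; exact Finset.mem_univ i)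
    have hsum : ∑ i ∈ T \ S k, marg v k (S k) i ≤ ∑ i ∈ T \ S k, p i :=
      Finset.sum_le_sum hm
    have hun : S k ∪ T = S k ∪ (T \ S k) := Finset.union_sdiff_self_eq_union.symm
    have hdisj : Disjoint (S k) (T \ S k) := Finset.disjoint_sdiff
    have hsumeq : ∑ i ∈ S k ∪ T, p i = v k (S k) + ∑ i ∈ T \ S k, p i := by
      rw [hun, Finset.sum_union hdisj, h5 k]
    linarith
  -- budget balance
  have hbb : ∑ i, p i = ∑ k, v k (S k) := by
    have := Finset.sum_biUnion (f := p) (s := (Finset.univ : Finset P)) (t := S)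
      (fun x _ y _ hxy => h2 x y hxy)
    rw [h3] at this
    rw [this]
    exact Finset.sum_congr rfl (fun k _ => h5 k)
  refine ⟨S, p, h2, h3, h4, hstab, hbb, ?_⟩
  intro S' hd' hu'
  have key : ∀ k, v k (S' k) ≤ v k (S k) + ∑ i ∈ S' k, p i := by
    intro k
    have h0 : v k (S' k) ≤ v k (S k ∪ S' k) := hmono k _ _ Finset.subset_union_right
    have h1' := hstab k (S' k)
    have h2' : ∑ i ∈ S k ∪ S' k, p i ≤ ∑ i ∈ S k, p i + ∑ i ∈ S' k, p i := by
      have hun : S k ∪ S' k = S k ∪ (S' k \ S k) := Finset.union_sdiff_self_eq_union.symm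
      rw [hun, Finset.sum_union Finset.disjoint_sdiff]
      have : ∑ i ∈ S' k \ S k, p i ≤ ∑ i ∈ S' k, p i :=
        Finset.sum_le_sum_of_subset_of_nonneg (Finset.sdiff_subset) (fun i _ _ => h4 i)
      linarith
    rw [h5 k] at h2'
    linarith
  have hsum' : ∑ k, ∑ i ∈ S' k, p i = ∑ i, p i := by
    have := Finset.sum_biUnion (f := p) (s := (Finset.univ : Finset P)) (t := S')
      (fun x _ y _ hxy => hd' x y hxy)
    rw [hu'] at this
    rw [this]
  calc ∑ k, v k (S' k) ≤ ∑ k, (v k (S k) + ∑ i ∈ S' k, p i) :=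
        Finset.sum_le_sum (fun k _ => key k)
    _ = ∑ k, v k (S k) + ∑ k, ∑ i ∈ S' k, p i := Finset.sum_add_distrib
    _ = 2 * ∑ k, v k (S k) := by rw [hsum', hbb]; ring
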